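/- For every real number α₁ > 4/π − 1, there exist positive real numbers a, b with a ≠ b such that α₁·C(a,b) + (1−α₁)·A(a,b) ≥ T(a,b); that is, 4/π − 1 is the greatest constant α₁ for which α₁·C(a,b) + (1−α₁)·A(a,b) < T(a,b) holds for all a ≠ b. -/

import Mathlib

open Real

/-- The Seiffert mean of two positive reals. -/
noncomputable def seiffertT (a b : ℝ) : ℝ := (a - b) / (2 * Real.arctan ((a - b) / (a + b)))

/-- The arithmetic mean of two positive reals. -/
noncomputable def arithMean (a b : ℝ) : ℝ := (a + b) / 2

/-- The contra-harmonic mean of two positive reals. -/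
noncomputable def contraharmonicMean (a b : ℝ) : ℝ := (a ^ 2 + b ^ 2) / (a + b)

theorem stmt_7 (α₁ : ℝ) (hα₁ : 4 / π - 1 < α₁) :
    ∃ a b : ℝ, 0 < a ∧ 0 < b ∧ a ≠ b ∧
      α₁ * contraharmonicMean a b + (1 - α₁) * arithMean a b ≥ seiffertT a b := by
  have hπ : 0 < π := Real.pi_pos
  set g : ℝ → ℝ := fun b =>
    α₁ * ((1 ^ 2 + b ^ 2) / (1 + b)) + (1 - α₁) * ((1 + b) / 2)
      - (1 - b) / (2 * Real.arctan ((1 - b) / (1 + b))) with hg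
  have hg0 : 0 < g 0 := by
    have : g 0 = α₁ + (1 - α₁) / 2 - 2 / π := by
      simp [hg, Real.arctan_one]
      field_simp
      ring
    rw [this]
    have h1 : 4 / π < α₁ + 1 := by linarith
    have h2 : 4 / π = 2 * (2 / π) := by ring
    linarith
  have hcont : ContinuousAt g 0 := by
    apply ContinuousAt.sub
    · apply ContinuousAt.add
      · exact (continuousAt_const.mul (((continuousAt_const.pow 2 |>.add
          (continuousAt_id.pow 2)).div (continuousAt_const.add continuousAt_id) (by norm_num))))
      · fun_prop
    · apply ContinuousAt.div
      · fun_prop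
      · apply continuousAt_const.mul
        apply Real.continuous_arctan.continuousAt.comp
        exact (continuousAt_const.sub continuousAt_id).div
          (continuousAt_const.add continuousAt_id) (by norm_num)
      · simp [Real.arctan_one]
  have hev : ∀ᶠ b in nhdsWithin 0 (Set.Ioi 0), 0 < g b ∧ b ∈ Set.Ioo (0:ℝ) 1 := by
    filter_upwards [(hcont.eventually (eventually_gt_nhds hg0)).filter_mono nhdsWithin_le_nhds,
      Ioo_mem_nhdsGT_of_mem (by norm_num : (0:ℝ) ∈ Set.Ico (0:ℝ) 1)] with b h1 h2
    exact ⟨h1, h2⟩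
  obtain ⟨b, hgb, hb0, hb1⟩ := hev.exists
  refine ⟨1, b, one_pos, hb0, by linarith [hb1], ?_⟩
  simp only [seiffertT, arithMean, contraharmonicMean]
  simp only [hg] at hgb
  norm_num at hgb ⊢
  linarith
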